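/- Under the hypotheses of Theorem 1 with V(x̄_0, x_0) ≤ ε² where ε := max(√(V(x̄_0,x_0)), γ ū_max), and inputs ‖ū_ℓ‖ ≤ ū_max, for all ℓ ∈ ℕ: ‖M^{1/2}(x_ℓ − P x̄_ℓ)‖ ≤ ε. -/

import Mathlib

open Matrix

noncomputable def eunorm {n : ℕ} (v : Fin n → ℝ) : ℝ :=
  ‖(WithLp.equiv 2 (Fin n → ℝ)).symm v‖

/-- The square root `Matrix.PosSemidef.sqrt` of the older Mathlib, spelled out. -/
noncomputable def psdSqrt {n : ℕ} {A : Matrix (Fin n) (Fin n) ℝ} (hA : A.PosSemidef) :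
    Matrix (Fin n) (Fin n) ℝ :=
  hA.1.eigenvectorUnitary.1 * diagonal ((↑) ∘ (Real.sqrt ∘ hA.1.eigenvalues)) *
  (star hA.1.eigenvectorUnitary : Matrix (Fin n) (Fin n) ℝ)
noncomputable def specNorm {m n : ℕ} (A : Matrix (Fin m) (Fin n) ℝ) : ℝ :=
  ‖LinearMap.toContinuousLinearMap (Matrix.toEuclideanLin A)‖

lemma psdSqrt_transpose' {n : ℕ} {A : Matrix (Fin n) (Fin n) ℝ} (hA : A.PosSemidef) :
    (psdSqrt hA)ᵀ = psdSqrt hA := by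
  unfold psdSqrt
  simp [Matrix.transpose_mul, Matrix.star_eq_conjTranspose, Matrix.mul_assoc]
lemma psdSqrt_mul_self' {n : ℕ} {A : Matrix (Fin n) (Fin n) ℝ} (hA : A.PosSemidef) :
    psdSqrt hA * psdSqrt hA = A := by
  unfold psdSqrt
  conv_rhs => rw [hA.1.spectral_theorem, Unitary.conjStarAlgAut_apply]
  have hU : (star hA.1.eigenvectorUnitary : Matrix (Fin n) (Fin n) ℝ) * hA.1.eigenvectorUnitary.1 = 1 :=
    Unitary.coe_star_mul_self _
  have hD : diagonal ((fun x : ℝ => x) ∘ (Real.sqrt ∘ hA.1.eigenvalues)) *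
      diagonal ((fun x : ℝ => x) ∘ (Real.sqrt ∘ hA.1.eigenvalues)) =
      diagonal (RCLike.ofReal ∘ hA.1.eigenvalues) := by
    rw [diagonal_mul_diagonal]
    congr 1; funext i
    simp [Real.mul_self_sqrt (hA.eigenvalues_nonneg i)]
  calc _ = hA.1.eigenvectorUnitary.1 * diagonal ((fun x : ℝ => x) ∘ (Real.sqrt ∘ hA.1.eigenvalues)) *
      ((star hA.1.eigenvectorUnitary : Matrix (Fin n) (Fin n) ℝ) * hA.1.eigenvectorUnitary.1) *
      diagonal ((fun x : ℝ => x) ∘ (Real.sqrt ∘ hA.1.eigenvalues)) *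
      (star hA.1.eigenvectorUnitary : Matrix (Fin n) (Fin n) ℝ) := by simp only [Matrix.mul_assoc]
    _ = _ := by rw [hU, Matrix.mul_one, Matrix.mul_assoc _ (diagonal _) (diagonal _), hD]
lemma eunorm_nonneg' {n : ℕ} (v : Fin n → ℝ) : 0 ≤ eunorm v := norm_nonneg _

lemma eunorm_sq' {n : ℕ} (v : Fin n → ℝ) : eunorm v ^ 2 = v ⬝ᵥ v := by
  rw [eunorm, EuclideanSpace.norm_sq_eq]
  simp [dotProduct, sq]

lemma eunorm_add_le' {n : ℕ} (v w : Fin n → ℝ) : eunorm (v + w) ≤ eunorm v + eunorm w := by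
  simpa [eunorm] using norm_add_le ((WithLp.equiv 2 (Fin n → ℝ)).symm v)
    ((WithLp.equiv 2 (Fin n → ℝ)).symm w)

lemma eunorm_mulVec_le' {m n : ℕ} (A : Matrix (Fin m) (Fin n) ℝ) (v : Fin n → ℝ) :
    eunorm (A.mulVec v) ≤ specNorm A * eunorm v := by
  have h := (LinearMap.toContinuousLinearMap (Matrix.toEuclideanLin A)).le_opNorm
    ((WithLp.equiv 2 (Fin n → ℝ)).symm v)
  simpa [eunorm, specNorm, Matrix.toLpLin_toLp] using h

lemma specNorm_nonneg' {m n : ℕ} (A : Matrix (Fin m) (Fin n) ℝ) : 0 ≤ specNorm A :=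
  norm_nonneg _

lemma arith_key' (l s t : ℝ) (hl0 : 0 < l) (hl : l < 1/2)
    (hs : s = Real.sqrt (1 - 2*l)) (ht : t = Real.sqrt (1 - l)) :
    l ≤ (1 - s) * t := by
  have h1 : (0:ℝ) ≤ 1 - 2*l := by linarith
  have h2 : (0:ℝ) ≤ 1 - l := by linarith
  have hs0 : 0 ≤ s := hs ▸ Real.sqrt_nonneg _
  have ht0 : 0 ≤ t := ht ▸ Real.sqrt_nonneg _
  have hs2 : s^2 = 1 - 2*l := by rw [hs, Real.sq_sqrt h1]
  have ht2 : t^2 = 1 - l := by rw [ht, Real.sq_sqrt h2]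
  nlinarith [sq_nonneg (s*t - (t - l)), sq_nonneg (t - (1 - l/2)), mul_nonneg hs0 ht0,
    mul_pos hl0 hl0, sq_nonneg (s - t), sq_nonneg (s + t), mul_nonneg (mul_nonneg hs0 hs0) ht0]

lemma arith_step' (l ε N u s t : ℝ) (hl0 : 0 < l) (hl : l < 1/2)
    (hs : s = Real.sqrt (1 - 2*l)) (ht : t = Real.sqrt (1 - l))
    (hε0 : 0 ≤ ε) (hγε : t / l * N * u ≤ ε) : s * ε + N * u ≤ ε := by
  have key := arith_key' l s t hl0 hl hs ht
  have ht0 : 0 < t := ht ▸ Real.sqrt_pos.mpr (by linarith)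
  have h1 : t * (N * u) ≤ l * ε := by
    have := mul_le_mul_of_nonneg_left hγε hl0.le
    field_simp at this ⊢
    nlinarith [this]
  have h2 : l * ε ≤ (1 - s) * t * ε := by nlinarith
  have h3 : t * (N * u) ≤ (1 - s) * t * ε := le_trans h1 h2
  nlinarith [h3, ht0]

/-- bound `‖M^{1/2}(x_ℓ − Px̄_ℓ)‖ ≤ ε` on the weighted state
tracking error, with `ε = max(√V(x̄₀,x₀), γ·ū_max)`. -/
theorem stmt_17 {n nb m mb p : ℕ}
    (A_L : Matrix (Fin n) (Fin n) ℝ) (B_L : Matrix (Fin n) (Fin m) ℝ)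
    (C : Matrix (Fin p) (Fin n) ℝ)
    (Ab_L : Matrix (Fin nb) (Fin nb) ℝ) (Bb_L : Matrix (Fin nb) (Fin mb) ℝ)
    (Cb : Matrix (Fin p) (Fin nb) ℝ)
    (M : Matrix (Fin n) (Fin n) ℝ) (hM : M.PosDef)
    (K : Matrix (Fin m) (Fin n) ℝ) (l : ℝ) (hl0 : 0 < l) (hl : l < 1 / 2)
    (hcontr : ((-(2 * l)) • M -
      ((A_L + B_L * K)ᵀ * M * (A_L + B_L * K) - M)).PosSemidef)
    (hMC : (M - Cᵀ * C).PosSemidef)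
    (P : Matrix (Fin n) (Fin nb) ℝ) (Q : Matrix (Fin m) (Fin nb) ℝ)
    (hCP : C * P = Cb) (hPA : P * Ab_L = A_L * P + B_L * Q)
    (R : Matrix (Fin m) (Fin mb) ℝ)
    (γ : ℝ)
    (hγ : γ = Real.sqrt (1 - l) / l * specNorm (psdSqrt hM.posSemidef * (B_L * R - P * Bb_L)))
    (ub_max : ℝ) (hub_max : 0 < ub_max)
    (xb : ℕ → Fin nb → ℝ) (x : ℕ → Fin n → ℝ) (ub : ℕ → Fin mb → ℝ)
    (hub : ∀ ℓ, eunorm (ub ℓ) ≤ ub_max)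
    (hdyn' : ∀ ℓ, xb (ℓ + 1) = Ab_L.mulVec (xb ℓ) + Bb_L.mulVec (ub ℓ))
    (hdyn : ∀ ℓ, x (ℓ + 1) = A_L.mulVec (x ℓ) +
      B_L.mulVec (R.mulVec (ub ℓ) + Q.mulVec (xb ℓ) +
        K.mulVec (x ℓ - P.mulVec (xb ℓ))))
    (ε : ℝ)
    (hε : ε = max (Real.sqrt ((x 0 - P.mulVec (xb 0)) ⬝ᵥ
        M.mulVec (x 0 - P.mulVec (xb 0)))) (γ * ub_max))
    (hV0 : (x 0 - P.mulVec (xb 0)) ⬝ᵥ M.mulVec (x 0 - P.mulVec (xb 0)) ≤ ε ^ 2) :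
    ∀ ℓ : ℕ, eunorm ((psdSqrt hM.posSemidef).mulVec (x ℓ - P.mulVec (xb ℓ))) ≤ ε := by
  set S := psdSqrt hM.posSemidef with hSdef
  have hST : Sᵀ = S := psdSqrt_transpose' _
  have hSS : S * S = M := psdSqrt_mul_self' _
  have hε0 : 0 ≤ ε := hε ▸ le_trans (Real.sqrt_nonneg _) (le_max_left _ _)
  -- quadratic form identity
  have hquad : ∀ v : Fin n → ℝ, eunorm (S.mulVec v) ^ 2 = v ⬝ᵥ M.mulVec v := by
    intro v
    rw [eunorm_sq', ← hSS, ← mulVec_mulVec, dotProduct_mulVec]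
    nth_rewrite 2 [← hST]
    rw [vecMul_transpose, dotProduct_comm]
  -- contraction inequality
  have hcontr' : ∀ v : Fin n → ℝ,
      ((A_L + B_L * K).mulVec v) ⬝ᵥ M.mulVec ((A_L + B_L * K).mulVec v) ≤
        (1 - 2*l) * (v ⬝ᵥ M.mulVec v) := by
    intro v
    have h := hcontr.dotProduct_mulVec_nonneg v
    simp only [star_trivial, sub_mulVec, smul_mulVec, dotProduct_sub,
      dotProduct_smul, smul_eq_mul] at h
    have hq : v ⬝ᵥ ((A_L + B_L * K)ᵀ * M * (A_L + B_L * K)).mulVec v =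
        ((A_L + B_L * K).mulVec v) ⬝ᵥ M.mulVec ((A_L + B_L * K).mulVec v) := by
      rw [← mulVec_mulVec, ← mulVec_mulVec, dotProduct_mulVec, vecMul_transpose]
    rw [hq] at h
    linarith
  -- error recurrence
  have he : ∀ ℓ, x (ℓ+1) - P.mulVec (xb (ℓ+1)) =
      (A_L + B_L * K).mulVec (x ℓ - P.mulVec (xb ℓ)) +
      (B_L * R - P * Bb_L).mulVec (ub ℓ) := by
    intro ℓ
    simp only [hdyn ℓ, hdyn' ℓ, mulVec_add, mulVec_sub, add_mulVec, sub_mulVec,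
      mulVec_mulVec, hPA, Matrix.add_mul, Matrix.mul_assoc]
    abel
  have hγε : Real.sqrt (1 - l) / l * specNorm (S * (B_L * R - P * Bb_L)) * ub_max ≤ ε := by
    calc Real.sqrt (1 - l) / l * specNorm (S * (B_L * R - P * Bb_L)) * ub_max
        = γ * ub_max := by rw [hγ]
      _ ≤ ε := hε ▸ le_max_right _ _
  intro ℓ
  induction ℓ with
  | zero =>
      have h1 : eunorm (S.mulVec (x 0 - P.mulVec (xb 0))) ^ 2 ≤ ε ^ 2 := by
        rw [hquad]; exact hV0
      have := Real.sqrt_le_sqrt h1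
      rwa [Real.sqrt_sq (eunorm_nonneg' _), Real.sqrt_sq hε0] at this
  | succ ℓ ih =>
      rw [he ℓ]
      simp only [mulVec_add, mulVec_mulVec]
      have h2l : (0:ℝ) ≤ 1 - 2*l := by linarith
      -- bound the contraction part
      have b1 : eunorm ((S * (A_L + B_L * K)).mulVec (x ℓ - P.mulVec (xb ℓ))) ≤
          Real.sqrt (1 - 2*l) * ε := by
        rw [← mulVec_mulVec]
        have hsq : eunorm (S.mulVec ((A_L + B_L * K).mulVec (x ℓ - P.mulVec (xb ℓ)))) ^ 2 ≤
            (1 - 2*l) * ε ^ 2 := by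
          rw [hquad]
          refine le_trans (hcontr' _) ?_
          have hV : (x ℓ - P.mulVec (xb ℓ)) ⬝ᵥ M.mulVec (x ℓ - P.mulVec (xb ℓ)) ≤ ε ^ 2 := by
            rw [← hquad]
            exact pow_le_pow_left₀ (eunorm_nonneg' _) ih 2
          exact mul_le_mul_of_nonneg_left hV h2l
        have := Real.sqrt_le_sqrt hsq
        rwa [Real.sqrt_sq (eunorm_nonneg' _), Real.sqrt_mul h2l,
          Real.sqrt_sq hε0] at this
      -- bound the input part
      have b2 : eunorm ((S * (B_L * R - P * Bb_L)).mulVec (ub ℓ)) ≤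
          specNorm (S * (B_L * R - P * Bb_L)) * ub_max :=
        le_trans (eunorm_mulVec_le' _ _)
          (mul_le_mul_of_nonneg_left (hub ℓ) (specNorm_nonneg' _))
      have final := arith_step' l ε (specNorm (S * (B_L * R - P * Bb_L))) ub_max
        (Real.sqrt (1 - 2*l)) (Real.sqrt (1 - l)) hl0 (by linarith) rfl rfl hε0 hγε
      have tri := eunorm_add_le' ((S * (A_L + B_L * K)).mulVec (x ℓ - P.mulVec (xb ℓ)))
        ((S * (B_L * R - P * Bb_L)).mulVec (ub ℓ))
      linarith [tri, b1, b2, final]
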